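/- Let t(x) = g_{\alpha_2}(1 - e^{-\beta_2 x}) and \sigma = \inf_{x \in [0,\bar{p}_2]} \liminf_{n\to\infty} (\prod_{k=0}^{n-1} \psi(\beta_2 t^k(x)))^{1/n}. If \varphi_1 \sigma > 1, then for every M > 0 there exists \bar{k} \in \mathbb{N} with the following property: for every q^0 \in [0,\bar{p}_2] there is some k \le \bar{k} such that \prod_{j=0}^{k-1} \varphi_1 \psi(\beta_2 t^j(q^0)) > M. -/

import Mathlib

/-- `g α x` : the expected density after the epidemic stage on a percolated 3-tree. -/
noncomputable def g (α x : ℝ) : ℝ :=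
  if x = 0 then 0
  else (1 - Real.sqrt (1 - 4 * (1 - α) * x * (1 - x))) ^ 3 / (8 * (1 - α) ^ 2 * x ^ 2)

/-- `ψ(x) = (1 - e^{-x})/x`, with `ψ(0) = 1`. -/
noncomputable def psi (x : ℝ) : ℝ := if x = 0 then 1 else (1 - Real.exp (-x)) / x

/-- `pbar α = sup_{x ∈ [0,1]} g α x`, the maximal density after an epidemic stage. -/
noncomputable def pbar (α : ℝ) : ℝ := sSup (g α '' Set.Icc 0 1)

/-- The one-type map for the strong species alone: `t(x) = g_{α₂}(1 - e^{-β₂ x})`. -/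
noncomputable def tmap (α₂ β₂ : ℝ) (x : ℝ) : ℝ := g α₂ (1 - Real.exp (-(β₂ * x)))

/-- `σ = inf_{x ∈ [0,p̄₂]} liminf_n (∏_{k<n} ψ(β₂ tᵏ(x)))^{1/n}`. -/
noncomputable def sigma (α₂ β₂ : ℝ) : ℝ :=
  sInf ((fun x => Filter.liminf
      (fun n : ℕ => (∏ k ∈ Finset.range n, psi (β₂ * (tmap α₂ β₂)^[k] x)) ^ (1 / (n : ℝ)))
      Filter.atTop) '' Set.Icc 0 (pbar α₂))

noncomputable def hfun (α y : ℝ) : ℝ :=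
  8 * (1 - α) * y * (1 - y) ^ 3 / (1 + Real.sqrt (1 - 4 * (1 - α) * y * (1 - y))) ^ 3

lemma sqrt_arg_nonneg {α y : ℝ} (hα : 0 ≤ α) (hy : 0 ≤ y) (hy1 : y ≤ 1) :
    0 ≤ 1 - 4 * (1 - α) * y * (1 - y) := by
  nlinarith [sq_nonneg (2 * y - 1), mul_nonneg (mul_nonneg hα hy) (sub_nonneg.2 hy1)]

lemma one_add_sqrt_pos (z : ℝ) : 0 < 1 + Real.sqrt z := by
  have := Real.sqrt_nonneg z; linarith

lemma g_eq_hfun {α y : ℝ} (hα0 : 0 ≤ α) (hα : α < 1) (hy : 0 ≤ y) (hy1 : y ≤ 1) :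
    g α y = hfun α y := by
  rcases eq_or_ne y 0 with rfl | hy0
  · simp [g, hfun]
  · have harg := sqrt_arg_nonneg hα0 hy hy1
    set s := Real.sqrt (1 - 4 * (1 - α) * y * (1 - y)) with hs
    have hs0 : 0 ≤ s := Real.sqrt_nonneg _
    have hs2 : s ^ 2 = 1 - 4 * (1 - α) * y * (1 - y) := Real.sq_sqrt harg
    have hds : (1 + s) ≠ 0 := by positivity
    have hA : (1 - α) ≠ 0 := by linarith
    rw [g, if_neg hy0, hfun]
    have key : (1 - s) * (1 + s) = 4 * (1 - α) * y * (1 - y) := by nlinarith [hs2]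
    field_simp
    linear_combination (((1-s)*(1+s))^2 + (1-s)*(1+s)*(4*(1-α)*y*(1-y)) + (4*(1-α)*y*(1-y))^2) * key

lemma hfun_nonneg {α y : ℝ} (hα : α ≤ 1) (hy : 0 ≤ y) (hy1 : y ≤ 1) : 0 ≤ hfun α y := by
  unfold hfun
  have h1 : 0 < (1 + Real.sqrt (1 - 4 * (1 - α) * y * (1 - y))) ^ 3 :=
    pow_pos (one_add_sqrt_pos _) 3
  have h2 : 0 ≤ 8 * (1 - α) * y * (1 - y) ^ 3 := by
    have h3 : (0:ℝ) ≤ (1 - y) ^ 3 := pow_nonneg (by linarith) 3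
    have := mul_nonneg (mul_nonneg (mul_nonneg (by norm_num : (0:ℝ) ≤ 8) (by linarith : (0:ℝ) ≤ 1 - α)) hy) h3
    linarith
  exact div_nonneg h2 h1.le

lemma continuous_hfun (α : ℝ) : Continuous (hfun α) := by
  unfold hfun
  apply Continuous.div
  · fun_prop
  · fun_prop
  · intro y
    exact pow_ne_zero 3 (ne_of_gt (one_add_sqrt_pos _))

lemma psi_pos {x : ℝ} (hx : 0 ≤ x) : 0 < psi x := by
  unfold psi
  rcases eq_or_ne x 0 with rfl | h
  · simp
  · have hx' : 0 < x := lt_of_le_of_ne hx (Ne.symm h)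
    rw [if_neg h]
    have : Real.exp (-x) < 1 := Real.exp_lt_one_iff.2 (by linarith)
    exact div_pos (by linarith) hx'

lemma psi_le_one {x : ℝ} (hx : 0 ≤ x) : psi x ≤ 1 := by
  unfold psi
  rcases eq_or_ne x 0 with rfl | h
  · simp
  · have hx' : 0 < x := lt_of_le_of_ne hx (Ne.symm h)
    rw [if_neg h, div_le_one hx']
    have := Real.add_one_le_exp (-x)
    linarith [Real.add_one_le_exp (-x)]

lemma continuous_psi : Continuous psi := by
  rw [continuous_iff_continuousAt]
  intro x
  rcases eq_or_ne x 0 with rfl | h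
  · have hd : HasDerivAt (fun y : ℝ => 1 - Real.exp (-y)) 1 0 := by
      have h1 : HasDerivAt (fun y : ℝ => Real.exp (-y)) (-1) 0 := by
        convert (hasDerivAt_neg (0:ℝ)).exp using 1 <;> simp
      simpa using h1.const_sub (1:ℝ)
    have hslope := hasDerivAt_iff_tendsto_slope.1 hd
    have heq : ∀ y ∈ ({0}ᶜ : Set ℝ), slope (fun y : ℝ => 1 - Real.exp (-y)) 0 y = psi y := by
      intro y hy
      have hy0 : y ≠ 0 := hy
      simp [slope, psi, if_neg hy0, div_eq_inv_mul]
    have h2 : Filter.Tendsto psi (nhdsWithin 0 {0}ᶜ) (nhds 1) := by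
      refine hslope.congr' ?_
      filter_upwards [self_mem_nhdsWithin] with y hy using heq y hy
    have h3 : Filter.Tendsto psi (pure 0) (nhds 1) := by
      have : psi 0 = 1 := by simp [psi]
      simpa [this] using tendsto_pure_nhds psi 0
    have h4 : Filter.Tendsto psi (nhds 0) (nhds 1) := by
      rw [← nhdsNE_sup_pure]
      exact h2.sup h3
    have : psi 0 = 1 := by simp [psi]
    unfold ContinuousAt
    rw [this]
    exact h4
  · have : ContinuousAt (fun y : ℝ => (1 - Real.exp (-y)) / y) x := by fun_prop (disch := assumption)
    apply this.congr
    filter_upwards [isOpen_compl_singleton.mem_nhds h] with y hy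
    have hy' : y ≠ 0 := hy
    simp [psi, hy']

noncomputable def Tfun (α₂ β₂ x : ℝ) : ℝ := hfun α₂ (1 - Real.exp (-(β₂ * x)))

lemma exp_arg_mem {β₂ x : ℝ} (hβ : 0 < β₂) (hx : 0 ≤ x) :
    0 ≤ 1 - Real.exp (-(β₂ * x)) ∧ 1 - Real.exp (-(β₂ * x)) ≤ 1 := by
  constructor
  · have : Real.exp (-(β₂ * x)) ≤ 1 := Real.exp_le_one_iff.2 (by nlinarith)
    linarith
  · have := Real.exp_pos (-(β₂ * x)); linarith

lemma tmap_eq_Tfun {α₂ β₂ x : ℝ} (hα0 : 0 ≤ α₂) (hα : α₂ < 1) (hβ : 0 < β₂) (hx : 0 ≤ x) :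
    tmap α₂ β₂ x = Tfun α₂ β₂ x := by
  obtain ⟨h1, h2⟩ := exp_arg_mem hβ hx
  exact g_eq_hfun hα0 hα h1 h2

lemma Tfun_nonneg {α₂ β₂ x : ℝ} (hα : α₂ < 1) (hβ : 0 < β₂) (hx : 0 ≤ x) :
    0 ≤ Tfun α₂ β₂ x := by
  obtain ⟨h1, h2⟩ := exp_arg_mem hβ hx
  exact hfun_nonneg hα.le h1 h2

lemma iterate_facts {α₂ β₂ : ℝ} (hα0 : 0 ≤ α₂) (hα : α₂ < 1) (hβ : 0 < β₂) {x : ℝ}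
    (hx : 0 ≤ x) (k : ℕ) :
    0 ≤ (Tfun α₂ β₂)^[k] x ∧ (tmap α₂ β₂)^[k] x = (Tfun α₂ β₂)^[k] x := by
  induction k with
  | zero => exact ⟨hx, rfl⟩
  | succ n ih =>
    obtain ⟨h1, h2⟩ := ih
    rw [Function.iterate_succ_apply', Function.iterate_succ_apply', h2]
    exact ⟨Tfun_nonneg hα hβ h1, tmap_eq_Tfun hα0 hα hβ h1⟩

lemma continuous_Tfun_iter (α₂ β₂ : ℝ) (k : ℕ) : Continuous ((Tfun α₂ β₂)^[k]) := by
  apply Continuous.iterate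
  exact (continuous_hfun α₂).comp (by fun_prop)

lemma pointwise (α₁ α₂ β₁ β₂ : ℝ)
    (hα₁ : α₁ ∈ Set.Ico (0:ℝ) 1) (hα₂ : α₂ ∈ Set.Ico (0:ℝ) 1)
    (hβ₁ : 0 < β₁) (hβ₂ : 0 < β₂)
    (hσ : 1 < (1 - α₁) * β₁ * sigma α₂ β₂) (M : ℝ)
    {q0 : ℝ} (hq : q0 ∈ Set.Icc (0:ℝ) (pbar α₂)) :
    ∃ n : ℕ, M < ∏ j ∈ Finset.range n, (1 - α₁) * β₁ * psi (β₂ * (Tfun α₂ β₂)^[j] q0) := by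
  set φ := (1 - α₁) * β₁ with hφdef
  have hφpos : 0 < φ := mul_pos (by linarith [hα₁.2]) hβ₁
  set u : ℝ → ℕ → ℝ := fun x n =>
    (∏ k ∈ Finset.range n, psi (β₂ * (tmap α₂ β₂)^[k] x)) ^ (1 / (n : ℝ)) with hudef
  -- basic bounds for x ≥ 0
  have hfac : ∀ x : ℝ, 0 ≤ x → ∀ k : ℕ,
      0 < psi (β₂ * (tmap α₂ β₂)^[k] x) ∧ psi (β₂ * (tmap α₂ β₂)^[k] x) ≤ 1 := by
    intro x hx k
    have h := iterate_facts hα₂.1 hα₂.2 hβ₂ hx k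
    have harg : 0 ≤ β₂ * (tmap α₂ β₂)^[k] x := by
      rw [h.2]; exact mul_nonneg hβ₂.le h.1
    exact ⟨psi_pos harg, psi_le_one harg⟩
  have hprod_pos : ∀ x : ℝ, 0 ≤ x → ∀ n : ℕ,
      0 < ∏ k ∈ Finset.range n, psi (β₂ * (tmap α₂ β₂)^[k] x) :=
    fun x hx n => Finset.prod_pos fun k _ => (hfac x hx k).1
  have hprod_le : ∀ x : ℝ, 0 ≤ x → ∀ n : ℕ,
      (∏ k ∈ Finset.range n, psi (β₂ * (tmap α₂ β₂)^[k] x)) ≤ 1 :=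
    fun x hx n => Finset.prod_le_one (fun k _ => (hfac x hx k).1.le) (fun k _ => (hfac x hx k).2)
  have hu_nonneg : ∀ x : ℝ, 0 ≤ x → ∀ n : ℕ, 0 ≤ u x n :=
    fun x hx n => Real.rpow_nonneg (hprod_pos x hx n).le _
  -- liminf is ≥ 0 on the relevant set
  have hliminf_nonneg : ∀ x : ℝ, 0 ≤ x →
      0 ≤ Filter.liminf (u x) Filter.atTop := by
    intro x hx
    apply Filter.le_liminf_of_le
    · have hb : Filter.IsBoundedUnder (· ≤ ·) Filter.atTop (u x) :=
        Filter.isBoundedUnder_of ⟨1, fun n => Real.rpow_le_one (hprod_pos x hx n).le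
          (hprod_le x hx n) (by positivity)⟩
      exact hb.isCoboundedUnder_ge
    · exact Filter.Eventually.of_forall (hu_nonneg x hx)
  have hBdd : BddBelow ((fun x => Filter.liminf
      (fun n : ℕ => (∏ k ∈ Finset.range n, psi (β₂ * (tmap α₂ β₂)^[k] x)) ^ (1 / (n : ℝ)))
      Filter.atTop) '' Set.Icc 0 (pbar α₂)) := by
    refine ⟨0, ?_⟩
    rintro r ⟨x, hx, rfl⟩
    exact hliminf_nonneg x hx.1
  have hσle : sigma α₂ β₂ ≤ Filter.liminf (u q0) Filter.atTop := by
    apply csInf_le hBdd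
    exact ⟨q0, hq, rfl⟩
  set L := Filter.liminf (u q0) Filter.atTop with hL
  have hL0 : 0 ≤ L := hliminf_nonneg q0 hq.1
  have hφL : 1 < φ * L := by
    have := mul_le_mul_of_nonneg_left hσle hφpos.le
    linarith
  set c := (1 / φ + L) / 2 with hc
  have h1φ : 1 / φ < L := by
    rw [div_lt_iff₀ hφpos]
    nlinarith
  have hc2 : c < L := by
    rw [hc]; linarith
  have hc0 : 0 < c := by
    have : 0 < 1 / φ := by positivity
    rw [hc]; linarith
  have hφc : 1 < φ * c := by
    have : φ * c = (1 + φ * L) / 2 := by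
      rw [hc]; field_simp
    rw [this]; linarith
  have hbound : Filter.IsBoundedUnder (· ≥ ·) Filter.atTop (u q0) :=
    Filter.isBoundedUnder_of ⟨0, fun n => hu_nonneg q0 hq.1 n⟩
  have hev : ∀ᶠ n in Filter.atTop, c < u q0 n :=
    Filter.eventually_lt_of_lt_liminf hc2 hbound
  obtain ⟨n0, hn0⟩ := Filter.eventually_atTop.1 hev
  obtain ⟨m, hm⟩ := pow_unbounded_of_one_lt M hφc
  set n := max (max m n0) 1 with hn
  have hn1 : n ≠ 0 := by positivity
  have hnm : m ≤ n := le_trans (le_max_left m n0) (le_max_left _ _)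
  have hnn0 : n0 ≤ n := le_trans (le_max_right m n0) (le_max_left _ _)
  have hcu : c < u q0 n := hn0 n hnn0
  set P := ∏ k ∈ Finset.range n, psi (β₂ * (tmap α₂ β₂)^[k] q0) with hP
  have hPpos : 0 < P := hprod_pos q0 hq.1 n
  have hun : (u q0 n) ^ n = P := by
    rw [hudef]
    simp only
    rw [← Real.rpow_natCast (P ^ (1 / (n:ℝ))) n, ← Real.rpow_mul hPpos.le,
      one_div, inv_mul_cancel₀ (Nat.cast_ne_zero.2 hn1), Real.rpow_one]
  have hcn : c ^ n < P := by
    calc c ^ n < (u q0 n) ^ n := pow_lt_pow_left₀ hcu hc0.le hn1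
    _ = P := hun
  refine ⟨n, ?_⟩
  have hprodsplit : ∏ j ∈ Finset.range n, φ * psi (β₂ * (Tfun α₂ β₂)^[j] q0)
      = φ ^ n * P := by
    rw [Finset.prod_mul_distrib, Finset.prod_const, Finset.card_range, hP]
    congr 1
    exact Finset.prod_congr rfl fun j _ => by
      rw [(iterate_facts hα₂.1 hα₂.2 hβ₂ hq.1 j).2]
  rw [hprodsplit]
  calc M < (φ * c) ^ m := hm
  _ ≤ (φ * c) ^ n := pow_le_pow_right₀ hφc.le hnm
  _ = φ ^ n * c ^ n := mul_pow φ c n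
  _ < φ ^ n * P := by
      apply mul_lt_mul_of_pos_left hcn (pow_pos hφpos n)

theorem stmt11 (α₁ α₂ β₁ β₂ : ℝ)
    (hα₁ : α₁ ∈ Set.Ico (0 : ℝ) 1) (hα₂ : α₂ ∈ Set.Ico (0 : ℝ) 1)
    (hβ₁ : 0 < β₁) (hβ₂ : 0 < β₂)
    (hσ : 1 < (1 - α₁) * β₁ * sigma α₂ β₂) :
    ∀ M : ℝ, 0 < M → ∃ kbar : ℕ, ∀ q0 ∈ Set.Icc (0 : ℝ) (pbar α₂),
      ∃ k ≤ kbar, M < ∏ j ∈ Finset.range k, (1 - α₁) * β₁ * psi (β₂ * (tmap α₂ β₂)^[j] q0) := by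
  intro M hM
  set F : ℕ → ℝ → ℝ := fun n q =>
    ∏ j ∈ Finset.range n, (1 - α₁) * β₁ * psi (β₂ * (Tfun α₂ β₂)^[j] q) with hF
  have hFcont : ∀ n, Continuous (F n) := by
    intro n
    apply continuous_finset_prod
    intro j _
    exact continuous_const.mul (continuous_psi.comp
      (continuous_const.mul (continuous_Tfun_iter α₂ β₂ j)))
  set V : ℕ → Set ℝ := fun n => {q | M < F n q} with hV
  have hVopen : ∀ n, IsOpen (V n) := fun n => isOpen_lt continuous_const (hFcont n)
  have hcover : Set.Icc (0:ℝ) (pbar α₂) ⊆ ⋃ n, V n := by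
    intro q0 hq0
    obtain ⟨n, hn⟩ := pointwise α₁ α₂ β₁ β₂ hα₁ hα₂ hβ₁ hβ₂ hσ M hq0
    exact Set.mem_iUnion.2 ⟨n, hn⟩
  obtain ⟨s, hs⟩ := isCompact_Icc.elim_finite_subcover V hVopen hcover
  refine ⟨s.sup id, ?_⟩
  intro q0 hq0
  obtain ⟨k, hks, hk⟩ := Set.mem_iUnion₂.1 (hs hq0)
  refine ⟨k, Finset.le_sup (f := id) hks, ?_⟩
  have heq : ∏ j ∈ Finset.range k, (1 - α₁) * β₁ * psi (β₂ * (tmap α₂ β₂)^[j] q0) = F k q0 := by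
    exact Finset.prod_congr rfl fun j _ => by
      rw [(iterate_facts hα₂.1 hα₂.2 hβ₂ hq0.1 j).2]
  rw [heq]
  exact hk
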